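/- Let h : F^n → F^n be a continuous map with h(0) = 0 that is differentiable at 0 with derivative Dh|_0 an F-linear isomorphism. Define ĥ : X → X by ĥ(x,[x]) = (h(x), [h(x)]) for x ≠ 0 and ĥ(0,[y]) = (0, [Dh|_0(y)]). Then ĥ is continuous and maps Σ to Σ. -/

import Mathlib

open scoped LinearAlgebra.Projectivization
open Topology Filter

/-- Quotient topology on projectivization. -/
instance projTopology (𝕜 V : Type*) [DivisionRing 𝕜] [AddCommGroup V] [Module 𝕜 V]
    [TopologicalSpace V] : TopologicalSpace (ℙ 𝕜 V) :=
  inferInstanceAs (TopologicalSpace (Quotient (projectivizationSetoid 𝕜 V)))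

/-- The classical blowup of `F^n` at the origin. -/
def blowupAtOrigin (𝕜 : Type*) [RCLike 𝕜] (n : ℕ) :
    Set ((Fin n → 𝕜) × ℙ 𝕜 (Fin n → 𝕜)) :=
  {p | ∃ μ : 𝕜, p.1 = μ • p.2.rep}

/-- `hHat` is the blowup lift of `h` (with derivative `D` at the origin):
`hHat(x,[x]) = (h x, [h x])` off the exceptional locus and
`hHat(0,[y]) = (0, [D y])` on it. -/
def BlowupLiftSpec (𝕜 : Type*) [RCLike 𝕜] (n : ℕ)
    (h : (Fin n → 𝕜) → (Fin n → 𝕜)) (D : (Fin n → 𝕜) ≃L[𝕜] (Fin n → 𝕜))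
    (hHat : ↥(blowupAtOrigin 𝕜 n) → ↥(blowupAtOrigin 𝕜 n)) : Prop :=
  (∀ (p : ↥(blowupAtOrigin 𝕜 n))
      (_ : (p : (Fin n → 𝕜) × ℙ 𝕜 (Fin n → 𝕜)).1 ≠ 0)
      (hh : h (p : (Fin n → 𝕜) × ℙ 𝕜 (Fin n → 𝕜)).1 ≠ 0),
      ((hHat p : ↥(blowupAtOrigin 𝕜 n)) : (Fin n → 𝕜) × ℙ 𝕜 (Fin n → 𝕜))
        = (h (p : (Fin n → 𝕜) × ℙ 𝕜 (Fin n → 𝕜)).1,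
           Projectivization.mk 𝕜 (h (p : (Fin n → 𝕜) × ℙ 𝕜 (Fin n → 𝕜)).1) hh)) ∧
  (∀ (p : ↥(blowupAtOrigin 𝕜 n)),
      (p : (Fin n → 𝕜) × ℙ 𝕜 (Fin n → 𝕜)).1 = 0 →
      ((hHat p : ↥(blowupAtOrigin 𝕜 n)) : (Fin n → 𝕜) × ℙ 𝕜 (Fin n → 𝕜))
        = (0, Projectivization.map ((D : (Fin n → 𝕜) →L[𝕜] (Fin n → 𝕜)) :
              (Fin n → 𝕜) →ₗ[𝕜] (Fin n → 𝕜)) D.injective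
              (p : (Fin n → 𝕜) × ℙ 𝕜 (Fin n → 𝕜)).2))

section Aux

variable {K V : Type*} [DivisionRing K] [AddCommGroup V] [Module K V] [TopologicalSpace V]

lemma continuous_projMk : Continuous (Projectivization.mk' K (V := V)) :=
  continuous_quot_mk

lemma isQuotientMap_projMk : IsQuotientMap (Projectivization.mk' K (V := V)) :=
  isQuotientMap_quot_mk

lemma isOpenMap_projMk [ContinuousConstSMul K V] :
    IsOpenMap (Projectivization.mk' K (V := V)) := by
  intro U hU
  rw [← isQuotientMap_projMk.isOpen_preimage]
  have key : Projectivization.mk' K ⁻¹' (Projectivization.mk' K '' U)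
      = ⋃ a : Kˣ, (fun w : {v : V // v ≠ 0} =>
          (⟨(a : K) • (w : V), smul_ne_zero a.ne_zero w.2⟩ : {v : V // v ≠ 0})) ⁻¹' U := by
    ext w
    simp only [Set.mem_preimage, Set.mem_image, Set.mem_iUnion]
    constructor
    · rintro ⟨v, hvU, hv⟩
      rw [Projectivization.mk'_eq_mk, Projectivization.mk'_eq_mk,
        Projectivization.mk_eq_mk_iff] at hv
      obtain ⟨a, ha⟩ := hv
      refine ⟨a, ?_⟩
      have : (⟨(a : K) • (w : V), smul_ne_zero a.ne_zero w.2⟩ : {v : V // v ≠ 0}) = v :=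
        Subtype.ext (by rw [← ha]; rw [Units.smul_def])
      rwa [this]
    · rintro ⟨a, haU⟩
      refine ⟨_, haU, ?_⟩
      rw [Projectivization.mk'_eq_mk, Projectivization.mk'_eq_mk,
        Projectivization.mk_eq_mk_iff]
      exact ⟨a, by rw [Units.smul_def]⟩
  rw [key]
  exact isOpen_iUnion fun a => hU.preimage
    (Continuous.subtype_mk (continuous_subtype_val.const_smul _) _)

lemma nhds_projMk [ContinuousConstSMul K V] (z : {v : V // v ≠ 0}) :
    𝓝 (Projectivization.mk' K z) = Filter.map (Projectivization.mk' K) (𝓝 z) :=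
  le_antisymm (isOpenMap_projMk.nhds_le z) (continuous_projMk.tendsto z)

end Aux

/-- If `h : F^n → F^n` is continuous, fixes the origin, is nonvanishing away
from the origin, and is differentiable at `0` with an `F`-linear isomorphism `D` as
derivative, then the lift `hHat` is continuous and maps the exceptional locus `Σ` to `Σ`. -/
theorem blowup_lift_continuous (𝕜 : Type*) [RCLike 𝕜] (n : ℕ)
    (h : (Fin n → 𝕜) → (Fin n → 𝕜)) (hcont : Continuous h) (h0 : h 0 = 0)
    (hne : ∀ x : Fin n → 𝕜, x ≠ 0 → h x ≠ 0)
    (D : (Fin n → 𝕜) ≃L[𝕜] (Fin n → 𝕜))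
    (hD : HasFDerivAt h (D : (Fin n → 𝕜) →L[𝕜] (Fin n → 𝕜)) 0)
    (hHat : ↥(blowupAtOrigin 𝕜 n) → ↥(blowupAtOrigin 𝕜 n))
    (hspec : BlowupLiftSpec 𝕜 n h D hHat) :
    Continuous hHat ∧
      ∀ p : ↥(blowupAtOrigin 𝕜 n), (p : (Fin n → 𝕜) × ℙ 𝕜 (Fin n → 𝕜)).1 = 0 →
        ((hHat p : ↥(blowupAtOrigin 𝕜 n)) : (Fin n → 𝕜) × ℙ 𝕜 (Fin n → 𝕜)).1 = 0 := by
  obtain ⟨spec1, spec2⟩ := hspec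
  refine ⟨?_, fun p hp => by rw [spec2 p hp]⟩
  set σ : {v : Fin n → 𝕜 // v ≠ 0} → ℙ 𝕜 (Fin n → 𝕜) := Projectivization.mk' 𝕜 with hσ
  set G : ↥(blowupAtOrigin 𝕜 n) → ℙ 𝕜 (Fin n → 𝕜) := fun p => (hHat p).val.2 with hG
  -- first coordinate of hHat is h of first coordinate
  have hfst : ∀ p : ↥(blowupAtOrigin 𝕜 n), (hHat p).val.1 = h p.val.1 := by
    intro p
    by_cases hx : p.val.1 = 0
    · rw [spec2 p hx, hx, h0]
    · rw [spec1 p hx (hne _ hx)]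
  -- reduce to continuity of the two components
  rw [continuous_induced_rng]
  have hval : (Subtype.val ∘ hHat) = fun p : ↥(blowupAtOrigin 𝕜 n) =>
      ((h p.val.1, G p) : (Fin n → 𝕜) × ℙ 𝕜 (Fin n → 𝕜)) :=
    funext fun p => Prod.ext (hfst p) rfl
  rw [hval]
  have hc1 : Continuous fun p : ↥(blowupAtOrigin 𝕜 n) => p.val.1 :=
    continuous_fst.comp continuous_subtype_val
  have hc2 : Continuous fun p : ↥(blowupAtOrigin 𝕜 n) => p.val.2 :=
    continuous_snd.comp continuous_subtype_val
  refine Continuous.prodMk (hcont.comp hc1) ?_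
  rw [continuous_iff_continuousAt]
  intro p
  -- key reduction: suffices to land in σ-images of neighbourhoods of a representative
  have key : ∀ z : {v : Fin n → 𝕜 // v ≠ 0}, G p = σ z →
      (∀ U ∈ 𝓝 z, ∀ᶠ q in 𝓝 p, G q ∈ σ '' U) → ContinuousAt G p := by
    intro z hGz hU
    rw [ContinuousAt, hGz, hσ, nhds_projMk z]
    intro s hs
    rw [Filter.mem_map] at hs ⊢
    filter_upwards [hU _ hs] with q hq
    obtain ⟨w, hw, hwq⟩ := hq
    show G q ∈ s
    rw [← hwq]; exact hw
  by_cases hx : p.val.1 = 0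
  · -- exceptional point
    set L : ℙ 𝕜 (Fin n → 𝕜) := p.val.2 with hL
    set u : Fin n → 𝕜 := L.rep with hu
    have hu0 : u ≠ 0 := L.rep_nonzero
    set Dc : (Fin n → 𝕜) →L[𝕜] (Fin n → 𝕜) := (D : (Fin n → 𝕜) →L[𝕜] (Fin n → 𝕜)) with hDc
    have hDu0 : Dc u ≠ 0 := by
      intro H
      apply hu0
      apply D.injective
      rw [map_zero]
      simpa [hDc] using H
    refine key ⟨Dc u, hDu0⟩ ?_ ?_
    · -- G p = σ ⟨D u, _⟩
      have := spec2 p hx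
      have h2 : G p = Projectivization.map (Dc : (Fin n → 𝕜) →ₗ[𝕜] (Fin n → 𝕜)) D.injective L :=
        congrArg Prod.snd this
      rw [h2, ← Projectivization.mk_rep L]
      exact Projectivization.map_mk _ _ _ _
    · intro U hUz
      replace hUz := (mem_nhds_subtype {v : Fin n → 𝕜 | v ≠ 0} _ _).mp hUz
      obtain ⟨t, ht, htU⟩ := hUz
      obtain ⟨ρ, hρ, hball⟩ := Metric.mem_nhds_iff.mp ht
      set C : ℝ := ‖Dc‖ with hC
      have hCnn : 0 ≤ C := norm_nonneg _
      set ε : ℝ := ρ / (2 * (‖u‖ + 2)) with hε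
      have hεpos : 0 < ε := by positivity
      set δ : ℝ := min 1 (ρ / (2 * (C + 1))) with hδ
      have hδpos : 0 < δ := lt_min one_pos (by positivity)
      have hδ1 : δ ≤ 1 := min_le_left _ _
      have hδρ : C * δ < ρ / 2 := by
        have h1 : δ ≤ ρ / (2 * (C + 1)) := min_le_right _ _
        have : C * δ ≤ C * (ρ / (2 * (C + 1))) :=
          mul_le_mul_of_nonneg_left h1 hCnn
        calc C * δ ≤ C * (ρ / (2 * (C + 1))) := this
          _ < ρ / 2 := by
            rw [← mul_div_assoc, div_lt_div_iff₀ (by positivity) (by norm_num)]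
            calc C * ρ * 2 = ρ * (2 * C) := by ring
              _ < ρ * (2 * (C + 1)) := mul_lt_mul_of_pos_left (by linarith) hρ
      -- little-o estimate
      have hlo : (fun x => h x - Dc x) =o[𝓝 (0 : Fin n → 𝕜)] fun x => x := by
        have := hD.isLittleO
        simpa [h0] using this
      have hev0 : ∀ᶠ x in 𝓝 (0 : Fin n → 𝕜), ‖h x - Dc x‖ ≤ ε * ‖x‖ := hlo.def hεpos
      -- pull back along first coordinate
      have htend : Filter.Tendsto (fun q : ↥(blowupAtOrigin 𝕜 n) => q.val.1)
          (𝓝 p) (𝓝 0) := by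
        have := hc1.tendsto p
        rwa [hx] at this
      have E1 : ∀ᶠ q in 𝓝 p,
          ‖h q.val.1 - Dc q.val.1‖ ≤ ε * ‖q.val.1‖ :=
        htend.eventually hev0
      -- second coordinate eventually has a representative δ-close to u
      have hNopen : IsOpen (σ '' (Subtype.val ⁻¹' Metric.ball u δ)) :=
        isOpenMap_projMk _ (Metric.isOpen_ball.preimage continuous_subtype_val)
      have hLmem : L ∈ σ '' (Subtype.val ⁻¹' Metric.ball u δ) := by
        refine ⟨⟨u, hu0⟩, Metric.mem_ball_self hδpos, ?_⟩
        exact Projectivization.mk_rep L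
      have E2 : ∀ᶠ q in 𝓝 p,
          q.val.2 ∈ σ '' (Subtype.val ⁻¹' Metric.ball u δ) :=
        hc2.tendsto p |>.eventually (hNopen.mem_nhds hLmem)
      filter_upwards [E1, E2] with q e1 e2
      obtain ⟨w, hwball, hwσ⟩ := e2
      have hwball' : ‖w.val - u‖ < δ := by
        simpa [dist_eq_norm] using hwball
      by_cases hq : q.val.1 = 0
      · -- q on the exceptional locus
        have hGq : G q = Projectivization.map (Dc : (Fin n → 𝕜) →ₗ[𝕜] (Fin n → 𝕜)) D.injective
            q.val.2 := congrArg Prod.snd (spec2 q hq)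
        have hDw0 : Dc w.val ≠ 0 := by
          intro H
          apply w.2
          apply D.injective
          rw [map_zero]
          simpa [hDc] using H
        have hGq2 : G q = σ ⟨Dc w.val, hDw0⟩ := by
          rw [hGq, ← hwσ, hσ, Projectivization.mk'_eq_mk]
          exact Projectivization.map_mk _ _ _ _
        refine ⟨⟨Dc w.val, hDw0⟩, htU ?_, hGq2.symm⟩
        refine hball ?_
        have : ‖Dc w.val - Dc u‖ ≤ C * ‖w.val - u‖ := by
          rw [← map_sub]; exact Dc.le_opNorm _
        have hlt : ‖Dc w.val - Dc u‖ < ρ := by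
          calc ‖Dc w.val - Dc u‖ ≤ C * ‖w.val - u‖ := this
            _ ≤ C * δ := mul_le_mul_of_nonneg_left hwball'.le hCnn
            _ < ρ / 2 := hδρ
            _ < ρ := by linarith
        simpa [Metric.mem_ball, dist_eq_norm] using hlt
      · -- q off the exceptional locus
        set x : Fin n → 𝕜 := q.val.1 with hxq
        have hGq : G q = σ ⟨h x, hne x hq⟩ := by
          have := congrArg Prod.snd (spec1 q hq (hne _ hq))
          simpa [hσ, Projectivization.mk'_eq_mk] using this
        -- the second coordinate of q is [x]
        obtain ⟨μ, hμ⟩ := q.2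
        have hμ0 : μ ≠ 0 := fun H => hq (by rw [hxq, hμ, H, zero_smul])
        have hq2 : q.val.2 = Projectivization.mk 𝕜 x hq := by
          rw [← Projectivization.mk_rep q.val.2]
          rw [Projectivization.mk_eq_mk_iff']
          exact ⟨μ⁻¹, by rw [hxq, hμ, inv_smul_smul₀ hμ0]⟩
        -- get the scalar c with c • x = w
        have hwx : Projectivization.mk 𝕜 w.val w.2 = Projectivization.mk 𝕜 x hq := by
          rw [← hq2, ← hwσ, hσ, Projectivization.mk'_eq_mk]
        obtain ⟨a, ha⟩ := (Projectivization.mk_eq_mk_iff 𝕜 _ _ w.2 hq).mp hwx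
        set c : 𝕜 := (a : 𝕜) with hc
        have hc0 : c ≠ 0 := a.ne_zero
        have hcx : c • x = w.val := by rw [← ha, Units.smul_def]
        have hchx0 : c • h x ≠ 0 := smul_ne_zero hc0 (hne x hq)
        have hGq2 : G q = σ ⟨c • h x, hchx0⟩ := by
          rw [hGq, hσ, Projectivization.mk'_eq_mk, Projectivization.mk'_eq_mk,
            Projectivization.mk_eq_mk_iff]
          exact ⟨a⁻¹, by rw [Units.smul_def, smul_smul]; simp [hc]⟩
        refine ⟨⟨c • h x, hchx0⟩, htU (hball ?_), hGq2.symm⟩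
        -- the norm estimate
        have hxw : ‖w.val‖ ≤ ‖u‖ + δ := by
          have := norm_sub_norm_le w.val u
          linarith [hwball'.le, this]
        have hkey : c • h x - Dc u = (Dc (c • x) - Dc u) + c • (h x - Dc x) := by
          rw [map_smul, smul_sub]
          abel
        have hb1 : ‖Dc (c • x) - Dc u‖ < ρ / 2 := by
          calc ‖Dc (c • x) - Dc u‖ = ‖Dc (c • x - u)‖ := by rw [map_sub]
            _ ≤ C * ‖c • x - u‖ := Dc.le_opNorm _
            _ ≤ C * δ := by
                rw [hcx]
                exact mul_le_mul_of_nonneg_left hwball'.le hCnn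
            _ < ρ / 2 := hδρ
        have hb2 : ‖c • (h x - Dc x)‖ < ρ / 2 := by
          have h1 : ‖c • (h x - Dc x)‖ = ‖c‖ * ‖h x - Dc x‖ := norm_smul _ _
          have h2 : ‖c‖ * ‖h x - Dc x‖ ≤ ‖c‖ * (ε * ‖x‖) :=
            mul_le_mul_of_nonneg_left e1 (norm_nonneg _)
          have h3 : ‖c‖ * (ε * ‖x‖) = ε * ‖c • x‖ := by
            rw [norm_smul]; ring
          have h4 : ε * ‖c • x‖ ≤ ε * (‖u‖ + δ) := by
            rw [hcx]
            exact mul_le_mul_of_nonneg_left hxw hεpos.le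
          have h5 : ε * (‖u‖ + δ) < ρ / 2 := by
            have h6 : ε * (‖u‖ + δ) ≤ ε * (‖u‖ + 1) :=
              mul_le_mul_of_nonneg_left (by linarith) hεpos.le
            have h7 : ε * (‖u‖ + 1) < ρ / 2 := by
              rw [hε, div_mul_eq_mul_div, div_lt_div_iff₀ (by positivity) (by norm_num)]
              calc ρ * (‖u‖ + 1) * 2 = ρ * ((‖u‖ + 1) * 2) := by ring
                _ < ρ * (2 * (‖u‖ + 2)) := mul_lt_mul_of_pos_left (by linarith) hρ
            linarith
          calc ‖c • (h x - Dc x)‖ = ‖c‖ * ‖h x - Dc x‖ := h1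
            _ ≤ ‖c‖ * (ε * ‖x‖) := h2
            _ = ε * ‖c • x‖ := h3
            _ ≤ ε * (‖u‖ + δ) := h4
            _ < ρ / 2 := h5
        have : ‖c • h x - Dc u‖ < ρ := by
          calc ‖c • h x - Dc u‖ ≤ ‖Dc (c • x) - Dc u‖ + ‖c • (h x - Dc x)‖ := by
                rw [hkey]; exact norm_add_le _ _
            _ < ρ := by linarith
        simpa [Metric.mem_ball, dist_eq_norm] using this
  · -- non-exceptional point
    have hh0 : h p.val.1 ≠ 0 := hne _ hx
    refine key ⟨h p.val.1, hh0⟩ ?_ ?_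
    · have := congrArg Prod.snd (spec1 p hx hh0)
      simpa [hσ, Projectivization.mk'_eq_mk] using this
    · intro U hUz
      replace hUz := (mem_nhds_subtype {v : Fin n → 𝕜 | v ≠ 0} _ _).mp hUz
      obtain ⟨t, ht, htU⟩ := hUz
      have E1 : ∀ᶠ q : ↥(blowupAtOrigin 𝕜 n) in 𝓝 p, h q.val.1 ∈ t :=
        (hcont.comp hc1).continuousAt.preimage_mem_nhds ht
      have E2 : ∀ᶠ q : ↥(blowupAtOrigin 𝕜 n) in 𝓝 p, q.val.1 ≠ 0 :=
        (isOpen_compl_singleton.preimage hc1).mem_nhds hx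
      filter_upwards [E1, E2] with q e1 e2
      have hGq : G q = σ ⟨h q.val.1, hne _ e2⟩ := by
        have := congrArg Prod.snd (spec1 q e2 (hne _ e2))
        simpa [hσ, Projectivization.mk'_eq_mk] using this
      exact ⟨⟨h q.val.1, hne _ e2⟩, htU e1, hGq.symm⟩
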